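/- arXiv:0804.0288 — 3 statements merged into one kernel-verified Lean document; each statement's English description precedes it below -/
import Mathlib

section
/- Let Γ be a countable group and Λ a countably infinite group, with Γ acting on Λ by group automorphisms (written g·y for g ∈ Γ, y ∈ Λ). Suppose ζ_n : Λ → P(Γ), n ≥ 1, is a sequence of maps into the probability densities on Γ such that for every n ≥ 1, every g ∈ Γ, and all x, x' ∈ Λ, the limit superior along the cofinite filter on Λ of y ↦ ‖ζ_n(g·y) − g·ζ_n(y)‖₁ + ‖ζ_n(x y x') − ζ_n(y)‖₁ is strictly less than 1/n. Then there exists a single map ζ : Λ → P(Γ) such that for every g ∈ Γ and all x, x' ∈ Λ, ‖ζ(g·y) − g·ζ(y)‖₁ + ‖ζ(x y x') − ζ(y)‖₁ → 0 along the cofinite filter on Λ. -/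
open Filter Finset

private lemma abs_sub_le_add' {a b : ℝ} (ha : 0 ≤ a) (hb : 0 ≤ b) : |a - b| ≤ a + b := by
  rw [abs_sub_le_iff]; constructor <;> linarith

private lemma tsum_abs_sub_le_two {ι : Type*} {u v : ι → ℝ}
    (hu0 : ∀ h, 0 ≤ u h) (hu : Summable u) (hu1 : ∑' h, u h = 1)
    (hv0 : ∀ h, 0 ≤ v h) (hv : Summable v) (hv1 : ∑' h, v h = 1) :
    ∑' h, |u h - v h| ≤ 2 := by
  calc ∑' h, |u h - v h| ≤ ∑' h, (u h + v h) :=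
        Summable.tsum_le_tsum (fun h => abs_sub_le_add' (hu0 h) (hv0 h)) (hu.sub hv).abs (hu.add hv)
    _ = 2 := by rw [Summable.tsum_add hu hv, hu1, hv1]; norm_num

private lemma tsum_mean_sub_mean_le {ι : Type*} (r : ℕ)
    (u v : ℕ → ι → ℝ) (hu : ∀ n, Summable (u n)) (hv : ∀ n, Summable (v n)) :
    ∑' h, |(∑ n ∈ Icc 1 r, u n h) / r - (∑ n ∈ Icc 1 r, v n h) / r|
      ≤ (∑ n ∈ Icc 1 r, ∑' h, |u n h - v n h|) / r := by
  have hsum : Summable (fun h => (∑ n ∈ Icc 1 r, |u n h - v n h|) / r) :=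
    (summable_sum fun n _ => ((hu n).sub (hv n)).abs).div_const _
  have hsf : Summable (fun h => |(∑ n ∈ Icc 1 r, u n h)/(r:ℝ) - (∑ n ∈ Icc 1 r, v n h)/r|) :=
    (((summable_sum fun n _ => hu n).div_const (r:ℝ)).sub
      ((summable_sum fun n _ => hv n).div_const _)).abs
  have key : ∑' h, (∑ n ∈ Icc 1 r, |u n h - v n h|) / (r:ℝ)
      = (∑ n ∈ Icc 1 r, ∑' h, |u n h - v n h|) / r := by
    rw [tsum_div_const, Summable.tsum_finsetSum fun n _ => ((hu n).sub (hv n)).abs]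
  rw [← key]
  apply Summable.tsum_le_tsum _ hsf hsum
  intro h
  rw [div_sub_div_same, abs_div, Nat.abs_cast, ← Finset.sum_sub_distrib]
  gcongr
  exact Finset.abs_sum_le_sum_abs _ _

private lemma tsum_mean_scale {ι : Type*} {r s : ℕ} (hr : 1 ≤ r) (hrs : r ≤ s)
    (v : ℕ → ι → ℝ) (hv0 : ∀ n h, 0 ≤ v n h) (hv : ∀ n, Summable (v n))
    (hv1 : ∀ n, ∑' h, v n h = 1) :
    ∑' h, |(∑ n ∈ Icc 1 r, v n h) / r - (∑ n ∈ Icc 1 s, v n h) / s|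
      ≤ 2 * ((s:ℝ) - r) / s := by
  have hr0 : (0:ℝ) < r := by exact_mod_cast hr
  have hs0 : (0:ℝ) < s := by exact_mod_cast hr.trans hrs
  set S1 : ι → ℝ := fun h => ∑ n ∈ Icc 1 r, v n h with hS1def
  set S2 : ι → ℝ := fun h => ∑ n ∈ Ioc r s, v n h with hS2def
  have hsplit : ∀ h, ∑ n ∈ Icc 1 s, v n h = S1 h + S2 h := by
    intro h
    rw [hS1def, hS2def]
    simp only [← Finset.Icc_add_one_left_eq_Ioc 0]
    exact (Finset.sum_Ioc_consecutive _ (Nat.zero_le r) hrs).symm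
  have hS1n : ∀ h, 0 ≤ S1 h := fun h => Finset.sum_nonneg fun n _ => hv0 n h
  have hS2n : ∀ h, 0 ≤ S2 h := fun h => Finset.sum_nonneg fun n _ => hv0 n h
  have hS1s : Summable S1 := summable_sum fun n _ => hv n
  have hS2s : Summable S2 := summable_sum fun n _ => hv n
  have htS1 : ∑' h, S1 h = (r:ℝ) := by
    rw [Summable.tsum_finsetSum fun n _ => hv n]
    rw [Finset.sum_congr rfl fun n _ => hv1 n]
    simp [Nat.card_Icc]
  have htS2 : ∑' h, S2 h = (s:ℝ) - r := by
    rw [Summable.tsum_finsetSum fun n _ => hv n]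
    rw [Finset.sum_congr rfl fun n _ => hv1 n]
    simp [Nat.card_Ioc]
    rw [Nat.cast_sub hrs]
  have hinv : (1:ℝ)/s ≤ 1/r := by
    apply one_div_le_one_div_of_le hr0
    exact_mod_cast hrs
  calc ∑' h, |(∑ n ∈ Icc 1 r, v n h) / r - (∑ n ∈ Icc 1 s, v n h) / s|
      = ∑' h, |S1 h / r - (S1 h + S2 h) / s| := tsum_congr fun h => by rw [hsplit h]
    _ ≤ ∑' h, (((1:ℝ)/r - 1/s) * S1 h + S2 h / s) := by
        apply Summable.tsum_le_tsum _ ((hS1s.div_const _ |>.sub ((hS1s.add hS2s).div_const _)).abs)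
          (((hS1s.mul_left _).add (hS2s.div_const _)))
        intro h
        have e : S1 h / r - (S1 h + S2 h) / s = ((1:ℝ)/r - 1/s) * S1 h - S2 h / s := by
          field_simp; ring
        rw [e]
        exact abs_sub_le_add' (mul_nonneg (by linarith) (hS1n h)) (div_nonneg (hS2n h) hs0.le)
    _ = ((1:ℝ)/r - 1/s) * r + ((s:ℝ) - r) / s := by
        rw [Summable.tsum_add (hS1s.mul_left _) (hS2s.div_const _), tsum_mul_left, tsum_div_const,
          htS1, htS2]
    _ ≤ 2 * ((s:ℝ) - r) / s := by
        apply le_of_eq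
        field_simp
        ring

private lemma tsum_mean_scale' {ι : Type*} {a b : ℕ} (ha : 1 ≤ a) (hb : 1 ≤ b)
    (hab : a ≤ b + 1) (hba : b ≤ a + 1)
    (v : ℕ → ι → ℝ) (hv0 : ∀ n h, 0 ≤ v n h) (hv : ∀ n, Summable (v n))
    (hv1 : ∀ n, ∑' h, v n h = 1) :
    ∑' h, |(∑ n ∈ Icc 1 a, v n h) / a - (∑ n ∈ Icc 1 b, v n h) / b|
      ≤ 2 / b := by
  have hb0 : (0:ℝ) < b := by exact_mod_cast hb
  have ha0 : (0:ℝ) < a := by exact_mod_cast ha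
  rcases le_total a b with hle | hle
  · refine (tsum_mean_scale ha hle v hv0 hv hv1).trans ?_
    have : (b:ℝ) - a ≤ 1 := by
      have : (b:ℝ) ≤ a + 1 := by exact_mod_cast hba
      linarith
    rw [div_le_div_iff₀ hb0 hb0]
    nlinarith
  · have flip : ∑' h, |(∑ n ∈ Icc 1 a, v n h) / (a:ℝ) - (∑ n ∈ Icc 1 b, v n h) / b|
        = ∑' h, |(∑ n ∈ Icc 1 b, v n h) / (b:ℝ) - (∑ n ∈ Icc 1 a, v n h) / a| :=
      tsum_congr fun h => abs_sub_comm _ _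
    rw [flip]
    refine (tsum_mean_scale hb hle v hv0 hv hv1).trans ?_
    have h1 : (a:ℝ) - b ≤ 1 := by
      have : (a:ℝ) ≤ b + 1 := by exact_mod_cast hab
      linarith
    have hba' : (b:ℝ) ≤ a := by exact_mod_cast hle
    rw [div_le_div_iff₀ ha0 hb0]
    nlinarith

private lemma sum_bound {a b K : ℕ} {D : ℕ → ℝ} (hD2 : ∀ n, D n ≤ 2)
    (hDgood : ∀ n, K < n → n < b → D n ≤ 1/K) (hab : a ≤ b + 1) :
    ∑ n ∈ Icc 1 a, D n ≤ 2*K + 4 + a / K := by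
  classical
  have step : ∀ n ∈ Icc 1 a,
      D n ≤ (if n ≤ K then (2:ℝ) else 0) + (if b ≤ n then (2:ℝ) else 0) + 1/K := by
    intro n _
    have hK0 : (0:ℝ) ≤ 1/K := by positivity
    by_cases h1 : n ≤ K
    · simp only [if_pos h1]
      have : (0:ℝ) ≤ if b ≤ n then (2:ℝ) else 0 := by split <;> norm_num
      linarith [hD2 n]
    · by_cases h2 : b ≤ n
      · simp only [if_neg h1, if_pos h2]
        linarith [hD2 n]
      · simp only [if_neg h1, if_neg h2]
        have := hDgood n (not_le.mp h1) (not_le.mp h2)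
        linarith
  refine (Finset.sum_le_sum step).trans ?_
  rw [Finset.sum_add_distrib, Finset.sum_add_distrib]
  have e1 : ∑ n ∈ Icc 1 a, (if n ≤ K then (2:ℝ) else 0) ≤ 2*K := by
    rw [← Finset.sum_filter]
    have hsub : (Icc 1 a).filter (· ≤ K) ⊆ Icc 1 K := by
      intro n hn
      simp only [Finset.mem_filter, Finset.mem_Icc] at hn ⊢
      omega
    calc ∑ _n ∈ (Icc 1 a).filter (· ≤ K), (2:ℝ)
        ≤ ∑ _n ∈ Icc 1 K, (2:ℝ) := Finset.sum_le_sum_of_subset_of_nonneg hsub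
          (fun _ _ _ => by norm_num)
      _ = 2*K := by simp [Nat.card_Icc]; ring
  have e2 : ∑ n ∈ Icc 1 a, (if b ≤ n then (2:ℝ) else 0) ≤ 4 := by
    rw [← Finset.sum_filter]
    have hsub : (Icc 1 a).filter (b ≤ ·) ⊆ Icc b (b+1) := by
      intro n hn
      simp only [Finset.mem_filter, Finset.mem_Icc] at hn ⊢
      omega
    calc ∑ _n ∈ (Icc 1 a).filter (b ≤ ·), (2:ℝ)
        ≤ ∑ _n ∈ Icc b (b+1), (2:ℝ) := Finset.sum_le_sum_of_subset_of_nonneg hsub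
          (fun _ _ _ => by norm_num)
      _ ≤ 4 := by
          rw [Finset.sum_const, Nat.card_Icc]
          have : b + 1 + 1 - b = 2 := by omega
          rw [this]; norm_num
  have e3 : ∑ _n ∈ Icc 1 a, (1:ℝ)/K = a / K := by
    rw [Finset.sum_const, Nat.card_Icc]
    simp [div_eq_mul_inv]
  linarith

private lemma tsum_abs_triangle {ι : Type*} {u v w : ι → ℝ}
    (hu : Summable u) (hv : Summable v) (hw : Summable w) :
    ∑' h, |u h - w h| ≤ (∑' h, |u h - v h|) + ∑' h, |v h - w h| := by
  rw [← Summable.tsum_add (hu.sub hv).abs (hv.sub hw).abs]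
  exact Summable.tsum_le_tsum (fun h => abs_sub_le _ _ _) (hu.sub hw).abs
    ((hu.sub hv).abs.add (hv.sub hw).abs)

set_option maxHeartbeats 2000000 in
/-- Let `Γ` be a countable group and `Λ` a countably infinite group, with `Γ`
acting on `Λ` by group automorphisms. If `ζ_n : Λ → P(Γ)` (`n ≥ 1`) satisfy
`limsup_{y→∞} (‖ζ_n(g·y) − g·ζ_n(y)‖₁ + ‖ζ_n(x y x') − ζ_n(y)‖₁) < 1/n` for all
`g ∈ Γ`, `x, x' ∈ Λ`, then there is a single `ζ : Λ → P(Γ)` with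
`‖ζ(g·y) − g·ζ(y)‖₁ + ‖ζ(x y x') − ζ(y)‖₁ → 0` along the cofinite filter. -/
theorem stmt_5 {Γ Λ : Type*} [Group Γ] [Group Λ] [Countable Γ] [Countable Λ]
    [Infinite Λ] [MulDistribMulAction Γ Λ]
    (ζ : ℕ → Λ → Γ → ℝ)
    (hdens : ∀ n y, (∀ h, 0 ≤ ζ n y h) ∧ Summable (ζ n y) ∧ ∑' h, ζ n y h = 1)
    (hlim : ∀ n : ℕ, 1 ≤ n → ∀ (g : Γ) (x x' : Λ),
      Filter.limsup
        (fun y => (∑' h, |ζ n (g • y) h - ζ n y (g⁻¹ * h)|) +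
                  (∑' h, |ζ n (x * y * x') h - ζ n y h|))
        Filter.cofinite < 1 / (n : ℝ)) :
    ∃ ζ' : Λ → Γ → ℝ,
      (∀ y, (∀ h, 0 ≤ ζ' y h) ∧ Summable (ζ' y) ∧ ∑' h, ζ' y h = 1) ∧
      (∀ (g : Γ) (x x' : Λ),
        Filter.Tendsto
          (fun y => (∑' h, |ζ' (g • y) h - ζ' y (g⁻¹ * h)|) +
                    (∑' h, |ζ' (x * y * x') h - ζ' y h|))
          Filter.cofinite (nhds 0)) := by
  classical
  obtain ⟨eΛ, heΛ⟩ := exists_surjective_nat Λ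
  obtain ⟨t, ht⟩ := exists_surjective_nat (Γ × Λ × Λ)
  -- basic density facts
  have hd0 : ∀ n y h, 0 ≤ ζ n y h := fun n y => (hdens n y).1
  have hds : ∀ n y, Summable (ζ n y) := fun n y => (hdens n y).2.1
  have hd1 : ∀ n y, ∑' h, ζ n y h = 1 := fun n y => (hdens n y).2.2
  -- translated densities
  have hts : ∀ n y (g : Γ), Summable (fun h => ζ n y (g * h)) := by
    intro n y g
    have : Summable (ζ n y ∘ ⇑(Equiv.mulLeft g)) := (Equiv.mulLeft g).summable_iff.mpr (hds n y)
    simpa [Function.comp_def] using this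
  have ht1 : ∀ n y (g : Γ), ∑' h, ζ n y (g * h) = 1 := by
    intro n y g
    have := (Equiv.mulLeft g).tsum_eq (ζ n y)
    simpa using this.trans (hd1 n y)
  -- the error functional and the bad sets
  obtain ⟨err, herr⟩ : ∃ err : ℕ → ℕ → Λ → ℝ, ∀ n k y,
      err n k y = (∑' h, |ζ n ((t k).1 • y) h - ζ n y ((t k).1⁻¹ * h)|) +
        (∑' h, |ζ n ((t k).2.1 * y * (t k).2.2) h - ζ n y h|) :=
    ⟨_, fun n k y => rfl⟩
  have herr2 : ∀ n k y, err n k y ≤ 4 := by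
    intro n k y
    rw [herr]
    have h1 : ∑' h, |ζ n ((t k).1 • y) h - ζ n y ((t k).1⁻¹ * h)| ≤ 2 :=
      tsum_abs_sub_le_two (hd0 n _) (hds n _) (hd1 n _) (fun h => hd0 n y _)
        (hts n y _) (ht1 n y _)
    have h2 : ∑' h, |ζ n ((t k).2.1 * y * (t k).2.2) h - ζ n y h| ≤ 2 :=
      tsum_abs_sub_le_two (hd0 n _) (hds n _) (hd1 n _) (hd0 n y) (hds n y) (hd1 n y)
    linarith
  obtain ⟨Bad, hBadDef⟩ : ∃ Bad : ℕ → ℕ → Set Λ, ∀ n k,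
      Bad n k = {y | 1 ≤ n ∧ ¬ err n k y < 1 / (n:ℝ)} := ⟨_, fun n k => rfl⟩
  have hBadFin : ∀ n k, (Bad n k).Finite := by
    intro n k
    rcases Nat.eq_zero_or_pos n with h0 | h0
    · have : Bad n k ⊆ (∅ : Set Λ) := by
        rw [hBadDef]; rintro y ⟨h1, -⟩; omega
      exact Set.finite_empty.subset this
    · have hb : Filter.IsBoundedUnder (· ≤ ·) Filter.cofinite (err n k) :=
        Filter.isBoundedUnder_of ⟨4, fun y => herr2 n k y⟩
      have hev : ∀ᶠ y in Filter.cofinite, err n k y < 1 / (n:ℝ) := by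
        apply Filter.eventually_lt_of_limsup_lt _ hb
        have := hlim n h0 (t k).1 (t k).2.1 (t k).2.2
        have heq : (fun y => (∑' h, |ζ n ((t k).1 • y) h - ζ n y ((t k).1⁻¹ * h)|) +
            (∑' h, |ζ n ((t k).2.1 * y * (t k).2.2) h - ζ n y h|)) = err n k := by
          funext y; rw [herr]
        rwa [heq] at this
      rw [Filter.eventually_cofinite] at hev
      apply hev.subset
      intro y hy
      rw [hBadDef] at hy
      exact hy.2
  -- the bijections
  obtain ⟨σ, hσdef⟩ : ∃ σ : ℕ → Equiv.Perm Λ, ∀ j, σ j = MulAction.toPerm ((t j).1) :=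
    ⟨_, fun j => rfl⟩
  obtain ⟨τ, hτdef⟩ : ∃ τ : ℕ → Equiv.Perm Λ, ∀ j,
      τ j = (Equiv.mulLeft (t j).2.1).trans (Equiv.mulRight (t j).2.2) := ⟨_, fun j => rfl⟩
  -- the exhaustion
  obtain ⟨W, hW0, hWsucc⟩ : ∃ W : ℕ → Set Λ, W 0 = ∅ ∧ ∀ m, W (m+1) =
      W m ∪ {eΛ m} ∪ (⋃ n ∈ Set.Iic (m+1), ⋃ k ∈ Set.Iic (m+1), Bad n k) ∪
        ⋃ j ∈ Set.Iic m, (σ j '' W m ∪ ⇑(σ j).symm '' W m ∪ τ j '' W m ∪ ⇑(τ j).symm '' W m) :=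
    ⟨fun m => Nat.rec ∅ (fun m Wm => Wm ∪ {eΛ m} ∪
      (⋃ n ∈ Set.Iic (m+1), ⋃ k ∈ Set.Iic (m+1), Bad n k) ∪
      ⋃ j ∈ Set.Iic m, (σ j '' Wm ∪ ⇑(σ j).symm '' Wm ∪ τ j '' Wm ∪ ⇑(τ j).symm '' Wm)) m,
      rfl, fun m => rfl⟩
  have hWfin : ∀ m, (W m).Finite := by
    intro m
    induction m with
    | zero => rw [hW0]; exact Set.finite_empty
    | succ m ih =>
      rw [hWsucc]
      refine (((ih.union (Set.finite_singleton _)).union ?_).union ?_)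
      · exact (Set.finite_Iic _).biUnion fun n _ =>
          (Set.finite_Iic _).biUnion fun k _ => hBadFin n k
      · exact (Set.finite_Iic _).biUnion fun j _ =>
          (((ih.image _).union (ih.image _)).union (ih.image _)).union (ih.image _)
  have hWsub : ∀ m, W m ⊆ W (m+1) := by
    intro m; rw [hWsucc]; intro y hy; exact Or.inl (Or.inl (Or.inl hy))
  have hWmono : Monotone W := monotone_nat_of_le_succ hWsub
  have hexW : ∀ y, ∃ m, y ∈ W m := by
    intro y
    obtain ⟨m, rfl⟩ := heΛ y
    exact ⟨m+1, by rw [hWsucc]; exact Or.inl (Or.inl (Or.inr rfl))⟩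
  obtain ⟨r, hrdef⟩ : ∃ r : Λ → ℕ, ∀ y, r y = sInf {m | y ∈ W m} := ⟨_, fun y => rfl⟩
  have hrmem : ∀ y, y ∈ W (r y) := fun y => by rw [hrdef]; exact Nat.sInf_mem (hexW y)
  have hrle : ∀ y m, y ∈ W m → r y ≤ m := fun y m hm => by rw [hrdef]; exact Nat.sInf_le hm
  have hrnot : ∀ y m, m < r y → y ∉ W m := fun y m hlt hm => absurd (hrle y m hm) (by omega)
  have hrpos : ∀ y, 1 ≤ r y := by
    intro y
    by_contra hc
    have h0 : r y = 0 := by omega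
    have := hrmem y
    rw [h0, hW0] at this
    exact this
  have hrfin : ∀ m, {y | r y ≤ m}.Finite := fun m =>
    (hWfin m).subset fun y hy => hWmono hy (hrmem y)
  have hrev : ∀ m, ∀ᶠ y in Filter.cofinite, m < r y := by
    intro m
    rw [Filter.eventually_cofinite]
    exact (hrfin m).subset fun y hy => by simpa using hy
  have hmove : ∀ j m y, j ≤ m → y ∈ W m →
      σ j y ∈ W (m+1) ∧ (σ j).symm y ∈ W (m+1) ∧ τ j y ∈ W (m+1) ∧
        (τ j).symm y ∈ W (m+1) := by
    intro j m y hj hy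
    rw [hWsucc]
    refine ⟨Or.inr ?_, Or.inr ?_, Or.inr ?_, Or.inr ?_⟩ <;>
    · apply Set.mem_biUnion (Set.mem_Iic.mpr hj)
      first
        | exact Or.inl (Or.inl (Or.inl (Set.mem_image_of_mem _ hy)))
        | exact Or.inl (Or.inl (Or.inr (Set.mem_image_of_mem _ hy)))
        | exact Or.inl (Or.inr (Set.mem_image_of_mem _ hy))
        | exact Or.inr (Set.mem_image_of_mem _ hy)
  have hrmove : ∀ j y, j ≤ r y → r (σ j y) ≤ r y + 1 ∧ r ((σ j).symm y) ≤ r y + 1 ∧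
      r (τ j y) ≤ r y + 1 ∧ r ((τ j).symm y) ≤ r y + 1 := by
    intro j y hj
    obtain ⟨h1, h2, h3, h4⟩ := hmove j (r y) y hj (hrmem y)
    exact ⟨hrle _ _ h1, hrle _ _ h2, hrle _ _ h3, hrle _ _ h4⟩
  have hlip : ∀ j (e : Equiv.Perm Λ), (e = σ j ∨ e = τ j) →
      ∀ᶠ y in Filter.cofinite, r (e y) ≤ r y + 1 ∧ r y ≤ r (e y) + 1 := by
    intro j e he
    have h2 : ∀ᶠ y in Filter.cofinite, j < r (e y) := by
      rw [Filter.eventually_cofinite]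
      have hsub : {y | ¬ j < r (e y)} ⊆ ⇑e ⁻¹' {z | r z ≤ j} := by
        intro y hy; simpa using hy
      exact (((hrfin j).preimage (e.injective.injOn))).subset hsub
    filter_upwards [hrev j, h2] with y hy1 hy2
    rcases he with rfl | rfl
    · refine ⟨(hrmove j y hy1.le).1, ?_⟩
      have h := (hrmove j (σ j y) hy2.le).2.1
      rwa [Equiv.symm_apply_apply] at h
    · refine ⟨(hrmove j y hy1.le).2.2.1, ?_⟩
      have h := (hrmove j (τ j y) hy2.le).2.2.2
      rwa [Equiv.symm_apply_apply] at h
  have hgood : ∀ n k m y, 1 ≤ n → n ≤ m + 1 → k ≤ m + 1 → y ∉ W (m+1) →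
      err n k y < 1/(n:ℝ) := by
    intro n k m y hn hnm hkm hy
    by_contra hc
    apply hy
    rw [hWsucc]
    refine Or.inl (Or.inr ?_)
    refine Set.mem_biUnion (Set.mem_Iic.mpr hnm) (Set.mem_biUnion (Set.mem_Iic.mpr hkm) ?_)
    rw [hBadDef]
    exact ⟨hn, hc⟩
  refine ⟨fun y h => (∑ n ∈ Finset.Icc 1 (r y), ζ n y h) / (r y : ℝ), ?_, ?_⟩
  · intro y
    have h1 : 1 ≤ r y := hrpos y
    have hne : ((r y : ℝ)) ≠ 0 := by
      have : 0 < r y := h1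
      exact_mod_cast this.ne'
    refine ⟨fun h => div_nonneg (Finset.sum_nonneg fun n _ => hd0 n y h) (by positivity),
      (summable_sum fun n _ => hds n y).div_const _, ?_⟩
    rw [tsum_div_const, Summable.tsum_finsetSum fun n _ => hds n y,
      Finset.sum_congr rfl fun n _ => hd1 n y, Finset.sum_const, Nat.card_Icc]
    have h2 : r y + 1 - 1 = r y := by omega
    rw [h2, nsmul_eq_mul, mul_one, div_self hne]
  · intro g x x'
    obtain ⟨k, hk⟩ := ht (g, x, x')
    obtain ⟨jg, hjg⟩ := ht (g, 1, 1)
    obtain ⟨jx, hjx⟩ := ht (1, x, x')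
    have hσapp : ∀ y, σ jg y = g • y := by intro y; rw [hσdef, hjg]; rfl
    have hτapp : ∀ y, τ jx y = x * y * x' := by
      intro y; rw [hτdef, hjx]; simp
    have hgoodk : ∀ n m y, 1 ≤ n → n ≤ m + 1 → k ≤ m + 1 → y ∉ W (m+1) →
        (∑' h, |ζ n (g • y) h - ζ n y (g⁻¹ * h)|) +
          (∑' h, |ζ n (x * y * x') h - ζ n y h|) < 1/(n:ℝ) := by
      intro n m y hn hnm hkm hy
      have h := hgood n k m y hn hnm hkm hy
      rw [herr, hk] at h
      exact h
    rw [Metric.tendsto_nhds]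
    intro ε hε
    set K : ℕ := max 1 ⌈(8:ℝ)/ε⌉₊ with hKdef
    have hK1 : 1 ≤ K := le_max_left _ _
    have hK0 : (0:ℝ) < K := by exact_mod_cast hK1
    have hKbig : (8:ℝ)/ε ≤ K :=
      le_trans (Nat.le_ceil _) (by exact_mod_cast le_max_right _ _)
    have hKineq : 1/(K:ℝ) ≤ ε/8 := by
      rw [div_le_iff₀ hK0]
      rw [div_le_iff₀ hε] at hKbig
      nlinarith
    set B0 : ℕ := ⌈(4*(K:ℝ)+16)*4/ε⌉₊ + 1 with hB0def
    have hB0 : (4*(K:ℝ)+16)*4/ε ≤ B0 := by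
      refine le_trans (Nat.le_ceil _) ?_
      rw [hB0def]
      push_cast
      linarith
    filter_upwards [hrev (max (max jg jx) (max k (max K B0))),
      hlip jg (σ jg) (Or.inl rfl), hlip jx (τ jx) (Or.inr rfl)] with y hy1 hy2 hy3
    simp only [max_lt_iff] at hy1
    obtain ⟨⟨hjgb, hjxb⟩, hkb, hKb, hB0b⟩ := hy1
    rw [hσapp y] at hy2
    rw [hτapp y] at hy3
    have hb1 : 1 ≤ r y := hrpos y
    have ha1 : 1 ≤ r (g • y) := hrpos _
    have hc1 : 1 ≤ r (x * y * x') := hrpos _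
    have hbig : ∀ (z : Λ) (v : ℕ → Γ → ℝ), (∀ n h, 0 ≤ v n h) → (∀ n, Summable (v n)) →
        (∀ n, ∑' h, v n h = 1) →
        (∀ n, K < n → n < r y → (∑' h, |ζ n z h - v n h|) ≤ 1/(K:ℝ)) →
        r z ≤ r y + 1 → r y ≤ r z + 1 →
        ∑' h, |(∑ n ∈ Finset.Icc 1 (r z), ζ n z h) / (r z : ℝ) -
            (∑ n ∈ Finset.Icc 1 (r y), v n h) / (r y : ℝ)|
          ≤ (2*(K:ℝ)+4)/(r z : ℝ) + 1/(K:ℝ) + 2/(r y : ℝ) := by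
      intro z v hv0 hvs hv1 hDgood hab hba
      have hz1 : 1 ≤ r z := hrpos z
      have hz0 : (0:ℝ) < r z := by exact_mod_cast hz1
      have s1 : Summable (fun h => (∑ n ∈ Finset.Icc 1 (r z), ζ n z h) / (r z : ℝ)) :=
        (summable_sum fun n _ => hds n z).div_const _
      have s2 : Summable (fun h => (∑ n ∈ Finset.Icc 1 (r z), v n h) / (r z : ℝ)) :=
        (summable_sum fun n _ => hvs n).div_const _
      have s3 : Summable (fun h => (∑ n ∈ Finset.Icc 1 (r y), v n h) / (r y : ℝ)) :=
        (summable_sum fun n _ => hvs n).div_const _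
      have hDsum : (∑ n ∈ Finset.Icc 1 (r z), ∑' h, |ζ n z h - v n h|)
          ≤ 2*(K:ℝ) + 4 + (r z : ℝ)/(K:ℝ) := by
        apply sum_bound
        · intro n
          exact tsum_abs_sub_le_two (hd0 n z) (hds n z) (hd1 n z) (hv0 n) (hvs n) (hv1 n)
        · exact hDgood
        · exact hab
      calc ∑' h, |(∑ n ∈ Finset.Icc 1 (r z), ζ n z h) / (r z : ℝ) -
              (∑ n ∈ Finset.Icc 1 (r y), v n h) / (r y : ℝ)|
          ≤ (∑' h, |(∑ n ∈ Finset.Icc 1 (r z), ζ n z h) / (r z : ℝ) -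
              (∑ n ∈ Finset.Icc 1 (r z), v n h) / (r z : ℝ)|) +
            ∑' h, |(∑ n ∈ Finset.Icc 1 (r z), v n h) / (r z : ℝ) -
              (∑ n ∈ Finset.Icc 1 (r y), v n h) / (r y : ℝ)| :=
            tsum_abs_triangle s1 s2 s3
        _ ≤ (∑ n ∈ Finset.Icc 1 (r z), ∑' h, |ζ n z h - v n h|) / (r z : ℝ)
            + 2/(r y : ℝ) := by
            refine add_le_add ?_ ?_
            · exact tsum_mean_sub_mean_le (r z) _ _ (fun n => hds n z) hvs
            · exact tsum_mean_scale' hz1 hb1 hab hba v hv0 hvs hv1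
        _ ≤ (2*(K:ℝ)+4)/(r z : ℝ) + 1/(K:ℝ) + 2/(r y : ℝ) := by
            have h1 : (∑ n ∈ Finset.Icc 1 (r z), ∑' h, |ζ n z h - v n h|) / (r z : ℝ)
                ≤ (2*(K:ℝ) + 4 + (r z : ℝ)/(K:ℝ))/(r z : ℝ) := by gcongr
            have h2 : (2*(K:ℝ) + 4 + (r z : ℝ)/(K:ℝ))/(r z : ℝ)
                = (2*(K:ℝ)+4)/(r z : ℝ) + 1/(K:ℝ) := by
              rw [add_div, div_right_comm ((r z:ℝ)) (K:ℝ), div_self hz0.ne']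
            linarith
    have herrsmall : ∀ n, K < n → n < r y →
        (∑' h, |ζ n (g • y) h - ζ n y (g⁻¹ * h)|) +
          (∑' h, |ζ n (x * y * x') h - ζ n y h|) < 1/(n:ℝ) := by
      intro n hKn hnb
      have hn1 : 1 ≤ n := by omega
      have hb2 : 2 ≤ r y := by omega
      have hm : r y - 2 + 1 = r y - 1 := by omega
      have hnW : y ∉ W (r y - 2 + 1) := by
        rw [hm]; exact hrnot y (r y - 1) (by omega)
      exact hgoodk n (r y - 2) y hn1 (by omega) (by omega) hnW
    have honeK : ∀ n : ℕ, K < n → 1/(n:ℝ) ≤ 1/(K:ℝ) := by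
      intro n hKn
      exact one_div_le_one_div_of_le hK0 (by exact_mod_cast hKn.le)
    have hDgood1 : ∀ n, K < n → n < r y →
        (∑' h, |ζ n (g • y) h - ζ n y (g⁻¹ * h)|) ≤ 1/(K:ℝ) := by
      intro n hKn hnb
      have h := herrsmall n hKn hnb
      have hpos : 0 ≤ ∑' h, |ζ n (x * y * x') h - ζ n y h| :=
        tsum_nonneg fun h => abs_nonneg _
      have := honeK n hKn
      linarith
    have hDgood2 : ∀ n, K < n → n < r y →
        (∑' h, |ζ n (x * y * x') h - ζ n y h|) ≤ 1/(K:ℝ) := by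
      intro n hKn hnb
      have h := herrsmall n hKn hnb
      have hpos : 0 ≤ ∑' h, |ζ n (g • y) h - ζ n y (g⁻¹ * h)| :=
        tsum_nonneg fun h => abs_nonneg _
      have := honeK n hKn
      linarith
    have hP1 : ∑' h, |(∑ n ∈ Finset.Icc 1 (r (g • y)), ζ n (g • y) h) / (r (g • y) : ℝ) -
        (∑ n ∈ Finset.Icc 1 (r y), ζ n y (g⁻¹ * h)) / (r y : ℝ)|
        ≤ (2*(K:ℝ)+4)/(r (g • y) : ℝ) + 1/(K:ℝ) + 2/(r y : ℝ) :=
      hbig (g • y) (fun n h => ζ n y (g⁻¹ * h)) (fun n h => hd0 n y _)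
        (fun n => hts n y g⁻¹) (fun n => ht1 n y g⁻¹) hDgood1 hy2.1 hy2.2
    have hP2 : ∑' h, |(∑ n ∈ Finset.Icc 1 (r (x * y * x')), ζ n (x * y * x') h) /
          (r (x * y * x') : ℝ) -
        (∑ n ∈ Finset.Icc 1 (r y), ζ n y h) / (r y : ℝ)|
        ≤ (2*(K:ℝ)+4)/(r (x * y * x') : ℝ) + 1/(K:ℝ) + 2/(r y : ℝ) :=
      hbig (x * y * x') (fun n h => ζ n y h) (fun n h => hd0 n y _)
        (fun n => hds n y) (fun n => hd1 n y) hDgood2 hy3.1 hy3.2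
    rw [Real.dist_eq, sub_zero, abs_of_nonneg (add_nonneg
      (tsum_nonneg fun h => abs_nonneg _) (tsum_nonneg fun h => abs_nonneg _))]
    -- numeric endgame
    have hAn : B0 ≤ r (g • y) := by omega
    have hCn : B0 ≤ r (x * y * x') := by omega
    have hBn : B0 ≤ r y := by omega
    have hB0pos : 0 < B0 := by rw [hB0def]; omega
    have hB0posR : (0:ℝ) < (B0:ℝ) := by exact_mod_cast hB0pos
    have hAr : (B0:ℝ) ≤ (r (g • y) : ℝ) := by exact_mod_cast hAn
    have hCr : (B0:ℝ) ≤ (r (x * y * x') : ℝ) := by exact_mod_cast hCn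
    have hBr : (B0:ℝ) ≤ (r y : ℝ) := by exact_mod_cast hBn
    have e1 : (2*(K:ℝ)+4)/(r (g • y) : ℝ) ≤ (2*(K:ℝ)+4)/(B0:ℝ) := by gcongr
    have e2 : (2*(K:ℝ)+4)/(r (x * y * x') : ℝ) ≤ (2*(K:ℝ)+4)/(B0:ℝ) := by gcongr
    have e3 : 2/(r y : ℝ) ≤ 2/(B0:ℝ) := by gcongr
    have hmul : 2*(K:ℝ)+8 ≤ ε/8 * (B0:ℝ) := by
      have h5 : ε/8 * ((4*(K:ℝ)+16)*4/ε) = 2*(K:ℝ)+8 := by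
        field_simp
        ring
      nlinarith [mul_le_mul_of_nonneg_left hB0 (show (0:ℝ) ≤ ε/8 by linarith)]
    have hK0' : (0:ℝ) ≤ K := hK0.le
    have e4 : (2*(K:ℝ)+4)/(B0:ℝ) ≤ ε/8 := by
      rw [div_le_iff₀ hB0posR]
      linarith
    have e5 : (2:ℝ)/(B0:ℝ) ≤ ε/8 := by
      rw [div_le_iff₀ hB0posR]
      linarith
    linarith [hP1, hP2, e1, e2, e3, e4, e5, hKineq]
end

section
/- Let E be a normed real vector space, let (μ_n) and (ν_n) be sequences in E with ‖μ_n‖ ≤ 1 and ‖ν_n‖ ≤ 1 for all n, let ε ≥ 0 and k ∈ ℕ, and suppose ‖μ_n − ν_n‖ ≤ ε for all n ≥ k. Then for all natural numbers N, M with N ≥ 2 and |N − M| ≤ 1, one has ‖ (1/N) ∑_{n=0}^{N−1} μ_n − (1/M) ∑_{n=0}^{M−1} ν_n ‖ ≤ ε + (2k + 4)/N. -/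
/-- Cesàro-averaging estimate: if `(μ_n)`, `(ν_n)` are sequences in a normed
real vector space with `‖μ_n‖ ≤ 1`, `‖ν_n‖ ≤ 1`, and `‖μ_n − ν_n‖ ≤ ε` for all
`n ≥ k`, then for `N ≥ 2` and `|N − M| ≤ 1`,
`‖(1/N)∑_{n<N} μ_n − (1/M)∑_{n<M} ν_n‖ ≤ ε + (2k + 4)/N`. -/
theorem stmt_7 {E : Type*} [NormedAddCommGroup E] [NormedSpace ℝ E]
    (μ ν : ℕ → E) (hμ : ∀ n, ‖μ n‖ ≤ 1) (hν : ∀ n, ‖ν n‖ ≤ 1)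
    (ε : ℝ) (hε : 0 ≤ ε) (k : ℕ) (hk : ∀ n, k ≤ n → ‖μ n - ν n‖ ≤ ε)
    (N M : ℕ) (hN : 2 ≤ N) (hNM : |(N : ℤ) - (M : ℤ)| ≤ 1) :
    ‖(N : ℝ)⁻¹ • ∑ n ∈ Finset.range N, μ n -
      (M : ℝ)⁻¹ • ∑ n ∈ Finset.range M, ν n‖ ≤ ε + (2 * k + 4) / N := by
  have habs' := abs_le.mp hNM
  have hM1 : 1 ≤ M := by omega
  have hNpos : (0:ℝ) < N := by positivity
  have hMpos : (0:ℝ) < M := by exact_mod_cast Nat.pos_of_ne_zero (by omega)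
  set A := ∑ n ∈ Finset.range N, μ n with hA
  set B := ∑ n ∈ Finset.range N, ν n with hB
  set C := ∑ n ∈ Finset.range M, ν n with hC
  -- bound on ‖A - B‖
  have h1 : ‖A - B‖ ≤ 2 * k + ε * N := by
    rw [hA, hB, ← Finset.sum_sub_distrib]
    calc ‖∑ n ∈ Finset.range N, (μ n - ν n)‖
        ≤ ∑ n ∈ Finset.range N, ‖μ n - ν n‖ := norm_sum_le _ _
      _ ≤ ∑ n ∈ Finset.range N, ((if n < k then 2 else 0) + ε) := by
          refine Finset.sum_le_sum fun n _ => ?_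
          by_cases h : n < k
          · simp only [h, if_pos]
            have := norm_sub_le (μ n) (ν n)
            have := hμ n; have := hν n; linarith
          · simp only [h, if_neg, not_false_iff]
            have := hk n (le_of_not_gt h); linarith
      _ = (∑ n ∈ Finset.range N, (if n < k then (2:ℝ) else 0)) + N * ε := by
          rw [Finset.sum_add_distrib, Finset.sum_const, Finset.card_range,
            nsmul_eq_mul]
      _ ≤ 2 * k + ε * N := by
          have hcard : ((Finset.range N).filter (fun n => n < k)).card ≤ k := by
            have hsub : (Finset.range N).filter (fun n => n < k) ⊆ Finset.range k := by
              intro x hx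
              simp only [Finset.mem_filter, Finset.mem_range] at hx ⊢
              exact hx.2
            simpa using Finset.card_le_card hsub
          have : (∑ n ∈ Finset.range N, (if n < k then (2:ℝ) else 0))
              = 2 * ((Finset.range N).filter (fun n => n < k)).card := by
            rw [Finset.sum_ite, Finset.sum_const_zero, add_zero,
              Finset.sum_const, nsmul_eq_mul, mul_comm]
          rw [this]
          have : (((Finset.range N).filter (fun n => n < k)).card : ℝ) ≤ k := by
            exact_mod_cast hcard
          linarith
  -- bound on ‖B - C‖
  have hdist : |(N:ℝ) - M| ≤ 1 := by exact_mod_cast hNM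
  have h2 : ‖B - C‖ ≤ 1 := by
    rcases le_total M N with h | h
    · have : B - C = ∑ n ∈ Finset.Ico M N, ν n := by
        rw [hB, hC, Finset.range_eq_Ico,
          ← Finset.sum_Ico_consecutive _ (Nat.zero_le M) h]
        rw [← Finset.range_eq_Ico]
        abel
      rw [this]
      calc ‖∑ n ∈ Finset.Ico M N, ν n‖ ≤ ∑ n ∈ Finset.Ico M N, ‖ν n‖ :=
            norm_sum_le _ _
        _ ≤ ∑ _n ∈ Finset.Ico M N, (1:ℝ) := Finset.sum_le_sum fun n _ => hν n
        _ = (N - M : ℕ) := by simp [Nat.card_Ico]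
        _ ≤ 1 := by
            have : (N:ℤ) - M ≤ 1 := le_of_abs_le hNM
            have : N - M ≤ 1 := by omega
            exact_mod_cast this
    · have : C - B = ∑ n ∈ Finset.Ico N M, ν n := by
        rw [hB, hC, Finset.range_eq_Ico,
          ← Finset.sum_Ico_consecutive _ (Nat.zero_le N) h]
        rw [← Finset.range_eq_Ico]
        abel
      rw [← norm_neg, neg_sub, this]
      calc ‖∑ n ∈ Finset.Ico N M, ν n‖ ≤ ∑ n ∈ Finset.Ico N M, ‖ν n‖ :=
            norm_sum_le _ _
        _ ≤ ∑ _n ∈ Finset.Ico N M, (1:ℝ) := Finset.sum_le_sum fun n _ => hν n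
        _ = (M - N : ℕ) := by simp [Nat.card_Ico]
        _ ≤ 1 := by
            have : (M:ℤ) - N ≤ 1 := by
              have := neg_abs_le ((N:ℤ) - M); linarith [le_of_abs_le hNM]
            have : M - N ≤ 1 := by omega
            exact_mod_cast this
  have hCnorm : ‖C‖ ≤ M := by
    calc ‖C‖ ≤ ∑ n ∈ Finset.range M, ‖ν n‖ := norm_sum_le _ _
      _ ≤ ∑ _n ∈ Finset.range M, (1:ℝ) := Finset.sum_le_sum fun n _ => hν n
      _ = M := by simp
  -- decomposition
  have key : (N : ℝ)⁻¹ • A - (M : ℝ)⁻¹ • C =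
      (N:ℝ)⁻¹ • (A - B) + (N:ℝ)⁻¹ • (B - C) + ((N:ℝ)⁻¹ - (M:ℝ)⁻¹) • C := by
    simp only [smul_sub, sub_smul]; abel
  rw [key]
  have hbd : ‖(N:ℝ)⁻¹ • (A - B) + (N:ℝ)⁻¹ • (B - C) + ((N:ℝ)⁻¹ - (M:ℝ)⁻¹) • C‖
      ≤ ‖(N:ℝ)⁻¹ • (A - B)‖ + ‖(N:ℝ)⁻¹ • (B - C)‖ + ‖((N:ℝ)⁻¹ - (M:ℝ)⁻¹) • C‖ :=
    norm_add₃_le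
  have e1 : ‖(N:ℝ)⁻¹ • (A - B)‖ ≤ (N:ℝ)⁻¹ * (2 * k + ε * N) := by
    rw [norm_smul, Real.norm_eq_abs, abs_of_pos (by positivity)]
    exact mul_le_mul_of_nonneg_left h1 (by positivity)
  have e2 : ‖(N:ℝ)⁻¹ • (B - C)‖ ≤ (N:ℝ)⁻¹ := by
    rw [norm_smul, Real.norm_eq_abs, abs_of_pos (by positivity)]
    calc (N:ℝ)⁻¹ * ‖B - C‖ ≤ (N:ℝ)⁻¹ * 1 :=
          mul_le_mul_of_nonneg_left h2 (by positivity)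
      _ = (N:ℝ)⁻¹ := mul_one _
  have e3 : ‖((N:ℝ)⁻¹ - (M:ℝ)⁻¹) • C‖ ≤ (N:ℝ)⁻¹ := by
    rw [norm_smul, Real.norm_eq_abs]
    have heq : (N:ℝ)⁻¹ - (M:ℝ)⁻¹ = ((M:ℝ) - N) / (N * M) := by
      field_simp
    have habs : |(N:ℝ)⁻¹ - (M:ℝ)⁻¹| = |(M:ℝ) - N| / (N * M) := by
      rw [heq, abs_div, abs_of_pos (by positivity : (0:ℝ) < (N:ℝ) * M)]
    rw [habs]
    have hMN : |(M:ℝ) - N| ≤ 1 := by rw [abs_sub_comm]; exact hdist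
    calc |(M:ℝ) - N| / (N * M) * ‖C‖ ≤ |(M:ℝ) - N| / (N * M) * M := by
          apply mul_le_mul_of_nonneg_left hCnorm (by positivity)
      _ = |(M:ℝ) - N| / N := by field_simp
      _ ≤ 1 / N := by gcongr
      _ = (N:ℝ)⁻¹ := one_div _
  have : (N:ℝ)⁻¹ * (2 * k + ε * N) + (N:ℝ)⁻¹ + (N:ℝ)⁻¹ ≤ ε + (2 * k + 4) / N := by
    rw [div_eq_mul_inv]
    have hNinv : (0:ℝ) < (N:ℝ)⁻¹ := by positivity
    have : (N:ℝ)⁻¹ * (N:ℝ) = 1 := inv_mul_cancel₀ (ne_of_gt hNpos)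
    nlinarith [hNinv]
  linarith [hbd, e1, e2, e3]
end

section
/- The group SL(2,ℤ) is virtually free: there exists a subgroup H of SL(2,ℤ) of finite index such that H is a free group. -/
open Matrix

private abbrev SL2Z := Matrix.SpecialLinearGroup (Fin 2) ℤ

private def mkSL (a b c d : ℤ) (h : a * d - b * c = 1) : SL2Z :=
  ⟨!![a, b; c, d], by rw [Matrix.det_fin_two_of]; linarith⟩

private lemma mkSL_congr {a b c d a' b' c' d' : ℤ} {h h'} (h1 : a = a') (h2 : b = b')
    (h3 : c = c') (h4 : d = d') : mkSL a b c d h = mkSL a' b' c' d' h' := by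
  subst h1 h2 h3 h4; rfl

private lemma mkSL_mul (a b c d a' b' c' d' : ℤ) (h h') :
    mkSL a b c d h * mkSL a' b' c' d' h' =
      mkSL (a * a' + b * c') (a * b' + b * d') (c * a' + d * c') (c * b' + d * d')
        (by have : (a*a'+b*c')*(c*b'+d*d') - (a*b'+b*d')*(c*a'+d*c')
              = (a*d-b*c)*(a'*d'-b'*c') := by ring
            rw [this, h, h', one_mul]) := by
  apply Subtype.ext
  show (!![a,b;c,d] : Matrix (Fin 2) (Fin 2) ℤ) * !![a',b';c',d'] = _
  rw [Matrix.mul_fin_two]; rfl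

private lemma mkSL_one : mkSL 1 0 0 1 (by ring) = 1 := by
  apply Subtype.ext
  show _ = (1 : Matrix (Fin 2) (Fin 2) ℤ)
  rw [Matrix.one_fin_two]; rfl

private def Amat : SL2Z := mkSL 1 2 0 1 (by ring)
private def Bmat : SL2Z := mkSL 1 0 2 1 (by ring)

private lemma Amat_zpow (k : ℤ) : Amat ^ k = mkSL 1 (2*k) 0 1 (by ring) := by
  induction k using Int.induction_on with
  | zero => simpa using mkSL_one.symm
  | succ n ih => rw [_root_.zpow_add, zpow_one, ih, Amat, mkSL_mul]; push_cast; exact mkSL_congr (by ring) (by ring) (by ring) (by ring)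
  | pred n ih =>
      rw [sub_eq_add_neg, _root_.zpow_add, ih]
      have : Amat ^ (-1 : ℤ) * Amat = 1 := by rw [_root_.zpow_neg_one, inv_mul_cancel]
      have hA : Amat ^ (-1 : ℤ) = mkSL 1 (-2) 0 1 (by ring) := by
        rw [_root_.zpow_neg_one]
        apply inv_eq_of_mul_eq_one_right
        rw [Amat, mkSL_mul]
        simpa using mkSL_one
      rw [hA, mkSL_mul]; push_cast; exact mkSL_congr (by ring) (by ring) (by ring) (by ring)

private lemma Bmat_zpow (k : ℤ) : Bmat ^ k = mkSL 1 0 (2*k) 1 (by ring) := by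
  induction k using Int.induction_on with
  | zero => simpa using mkSL_one.symm
  | succ n ih => rw [_root_.zpow_add, zpow_one, ih, Bmat, mkSL_mul]; push_cast; exact mkSL_congr (by ring) (by ring) (by ring) (by ring)
  | pred n ih =>
      rw [sub_eq_add_neg, _root_.zpow_add, ih]
      have hB : Bmat ^ (-1 : ℤ) = mkSL 1 0 (-2) 1 (by ring) := by
        rw [_root_.zpow_neg_one]
        apply inv_eq_of_mul_eq_one_right
        rw [Bmat, mkSL_mul]
        simpa using mkSL_one
      rw [hB, mkSL_mul]; push_cast; exact mkSL_congr (by ring) (by ring) (by ring) (by ring)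
private abbrev Vnz := {v : ℤ × ℤ // v ≠ 0}

private def slSmul (g : SL2Z) (v : ℤ × ℤ) : ℤ × ℤ :=
  (g.1 0 0 * v.1 + g.1 0 1 * v.2, g.1 1 0 * v.1 + g.1 1 1 * v.2)

private lemma slSmul_ne_zero (g : SL2Z) {v : ℤ × ℤ} (hv : v ≠ 0) : slSmul g v ≠ 0 := by
  intro h
  have hdet : g.1 0 0 * g.1 1 1 - g.1 0 1 * g.1 1 0 = 1 := by
    have := g.2; rwa [Matrix.det_fin_two] at this
  have h1 : g.1 0 0 * v.1 + g.1 0 1 * v.2 = 0 := congrArg Prod.fst h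
  have h2 : g.1 1 0 * v.1 + g.1 1 1 * v.2 = 0 := congrArg Prod.snd h
  apply hv
  have hx : v.1 = 0 := by linear_combination g.1 1 1 * h1 - g.1 0 1 * h2 - v.1 * hdet
  have hy : v.2 = 0 := by linear_combination g.1 0 0 * h2 - g.1 1 0 * h1 - v.2 * hdet
  exact Prod.ext hx hy

private instance : MulAction SL2Z Vnz where
  smul g v := ⟨slSmul g v.1, slSmul_ne_zero g v.2⟩
  one_smul v := by
    apply Subtype.ext
    show slSmul 1 v.1 = v.1
    have h : ((1 : SL2Z) : Matrix (Fin 2) (Fin 2) ℤ) = 1 := rfl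
    simp [slSmul, h, Matrix.one_apply]
  mul_smul g h v := by
    apply Subtype.ext
    show slSmul (g * h) v.1 = slSmul g (slSmul h v.1)
    have hc : ((g * h : SL2Z) : Matrix (Fin 2) (Fin 2) ℤ) = g.1 * h.1 := rfl
    simp only [slSmul, hc, Matrix.mul_apply, Fin.sum_univ_two]
    simp only [Prod.mk.injEq]
    constructor <;> ring

private lemma smul_mk (g : SL2Z) (v : ℤ × ℤ) (hv : v ≠ 0) :
    (g • (⟨v, hv⟩ : Vnz)).1 = slSmul g v := rfl

private lemma slSmul_mkSL (a b c d : ℤ) (h) (x y : ℤ) :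
    slSmul (mkSL a b c d h) (x, y) = (a * x + b * y, c * x + d * y) := by
  simp [slSmul, mkSL]
private def XS : Bool → Set Vnz
  | true => {v | v.1.2 * v.1.2 < v.1.1 * v.1.1 ∧ 0 ≤ v.1.1 * v.1.2}
  | false => {v | v.1.1 * v.1.1 ≤ v.1.2 * v.1.2 ∧ 0 ≤ v.1.1 * v.1.2}

private def YS : Bool → Set Vnz
  | true => {v | v.1.2 * v.1.2 ≤ v.1.1 * v.1.1 ∧ v.1.1 * v.1.2 < 0}
  | false => {v | v.1.1 * v.1.1 < v.1.2 * v.1.2 ∧ v.1.1 * v.1.2 < 0}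

private def gens : Bool → SL2Z
  | true => Amat
  | false => Bmat

private lemma sq_sum_pos (v : Vnz) : 0 < v.1.1 * v.1.1 + v.1.2 * v.1.2 := by
  rcases v with ⟨⟨x, y⟩, hv⟩
  rcases eq_or_ne x 0 with rfl | hx
  · rcases eq_or_ne y 0 with rfl | hy
    · exact absurd rfl hv
    · simpa using mul_self_pos.2 hy
  · nlinarith [mul_self_pos.2 hx, mul_self_nonneg y]

private lemma pp_inj : Function.Injective (FreeGroup.lift gens) := by
  apply FreeGroup.injective_lift_of_ping_pong gens XS YS
  · intro b
    cases b
    · exact ⟨⟨(0, 1), by simp⟩, by simp [XS]⟩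
    · exact ⟨⟨(1, 0), by simp⟩, by simp [XS]⟩
  · intro b c hbc
    cases b <;> cases c <;> first
      | exact absurd rfl hbc
      | · refine Set.disjoint_left.2 fun v h1 h2 => ?_
          simp only [XS, Set.mem_setOf_eq] at h1 h2
          obtain ⟨h1a, h1b⟩ := h1; obtain ⟨h2a, h2b⟩ := h2
          linarith
  · intro b c hbc
    cases b <;> cases c <;> first
      | exact absurd rfl hbc
      | · refine Set.disjoint_left.2 fun v h1 h2 => ?_
          simp only [YS, Set.mem_setOf_eq] at h1 h2
          obtain ⟨h1a, h1b⟩ := h1; obtain ⟨h2a, h2b⟩ := h2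
          linarith
  · intro b c
    cases b <;> cases c <;>
      · refine Set.disjoint_left.2 fun v h1 h2 => ?_
        simp only [XS, YS, Set.mem_setOf_eq] at h1 h2
        obtain ⟨h1a, h1b⟩ := h1; obtain ⟨h2a, h2b⟩ := h2
        linarith
  · intro b
    rintro w ⟨v, hv, rfl⟩
    simp only [Set.mem_compl_iff] at hv
    rcases v with ⟨⟨x, y⟩, hne⟩
    have hpos := sq_sum_pos ⟨(x, y), hne⟩
    cases b
    · -- B • (YS false)ᶜ ⊆ XS false
      simp only [YS, Set.mem_setOf_eq, not_and, not_lt] at hv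
      show Bmat • (⟨(x,y),hne⟩ : Vnz) ∈ XS false
      have hs : (Bmat • (⟨(x,y),hne⟩ : Vnz)).1 = (x, 2*x + y) := by
        rw [smul_mk, Bmat, slSmul_mkSL]; simp only [Prod.mk.injEq]; constructor <;> ring
      simp only [XS, Set.mem_setOf_eq, hs]
      rcases lt_or_ge (x*y) 0 with hxy | hxy
      · have h2 : y * y ≤ x * x := not_lt.1 fun h => (hv h).not_gt hxy
        constructor <;> nlinarith [sq_nonneg (x + y)]
      · constructor <;> nlinarith [sq_nonneg (x + y)]
    · -- A • (YS true)ᶜ ⊆ XS true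
      simp only [YS, Set.mem_setOf_eq, not_and, not_lt] at hv
      show Amat • (⟨(x,y),hne⟩ : Vnz) ∈ XS true
      have hs : (Amat • (⟨(x,y),hne⟩ : Vnz)).1 = (x + 2*y, y) := by
        rw [smul_mk, Amat, slSmul_mkSL]; simp only [Prod.mk.injEq]; constructor <;> ring
      simp only [XS, Set.mem_setOf_eq, hs]
      rcases lt_or_ge (x*y) 0 with hxy | hxy
      · have h2 : x * x < y * y := not_le.1 fun h => (hv h).not_gt hxy
        constructor <;> nlinarith [sq_nonneg (x + y)]
      · constructor <;> nlinarith [sq_nonneg (x + y)]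
  · intro b
    rintro w ⟨v, hv, rfl⟩
    simp only [Set.mem_compl_iff] at hv
    rcases v with ⟨⟨x, y⟩, hne⟩
    have hpos := sq_sum_pos ⟨(x, y), hne⟩
    cases b
    · -- B⁻¹ • (XS false)ᶜ ⊆ YS false
      simp only [XS, Set.mem_setOf_eq, not_and, not_le] at hv
      show (gens false)⁻¹ • (⟨(x,y),hne⟩ : Vnz) ∈ YS false
      have hBinv : (gens false)⁻¹ = mkSL 1 0 (-2) 1 (by ring) := by
        show Bmat⁻¹ = _
        apply inv_eq_of_mul_eq_one_right
        rw [Bmat, mkSL_mul]; simpa using mkSL_one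
      have hs : ((gens false)⁻¹ • (⟨(x,y),hne⟩ : Vnz)).1 = (x, y - 2*x) := by
        rw [smul_mk, hBinv, slSmul_mkSL]; simp only [Prod.mk.injEq]; constructor <;> ring
      simp only [YS, Set.mem_setOf_eq, hs]
      rcases lt_or_ge (x*y) 0 with hxy | hxy
      · constructor <;> nlinarith [sq_nonneg (x + y), sq_nonneg (x - y)]
      · have h2 : y * y < x * x := not_le.1 fun h => (hv h).not_ge hxy
        constructor <;> nlinarith [sq_nonneg (x + y), sq_nonneg (x - y)]
    · -- A⁻¹ • (XS true)ᶜ ⊆ YS true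
      simp only [XS, Set.mem_setOf_eq, not_and, not_le] at hv
      show (gens true)⁻¹ • (⟨(x,y),hne⟩ : Vnz) ∈ YS true
      have hAinv : (gens true)⁻¹ = mkSL 1 (-2) 0 1 (by ring) := by
        show Amat⁻¹ = _
        apply inv_eq_of_mul_eq_one_right
        rw [Amat, mkSL_mul]; simpa using mkSL_one
      have hs : ((gens true)⁻¹ • (⟨(x,y),hne⟩ : Vnz)).1 = (x - 2*y, y) := by
        rw [smul_mk, hAinv, slSmul_mkSL]; simp only [Prod.mk.injEq]; constructor <;> ring
      simp only [YS, Set.mem_setOf_eq, hs]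
      rcases lt_or_ge (x*y) 0 with hxy | hxy
      · constructor <;> nlinarith [sq_nonneg (x + y), sq_nonneg (x - y)]
      · have h2 : x * x ≤ y * y := not_lt.1 fun h => (hv h).not_ge hxy
        constructor <;> nlinarith [sq_nonneg (x + y), sq_nonneg (x - y)]
private def Hgrp : Subgroup SL2Z := Subgroup.closure {Amat, Bmat}

private lemma Amat_mem : Amat ∈ Hgrp := Subgroup.subset_closure (Set.mem_insert _ _)
private lemma Bmat_mem : Bmat ∈ Hgrp := Subgroup.subset_closure (Set.mem_insert_of_mem _ rfl)

private lemma key (n : ℕ) : ∀ (a b c d : ℤ) (h : a * d - b * c = 1), Odd a → Even b → Even c →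
    a.natAbs + c.natAbs = n →
    mkSL a b c d h ∈ Hgrp ∨ mkSL (-a) (-b) (-c) (-d) (by linarith [h]) ∈ Hgrp := by
  induction n using Nat.strong_induction_on with
  | _ n ih =>
    intro a b c d h ha hb hc hn
    rcases eq_or_ne c 0 with rfl | hc0
    · -- base case
      have had : a * d = 1 := by linarith
      obtain ⟨k, hk⟩ := hb
      rcases Int.mul_eq_one_iff_eq_one_or_neg_one.1 had with ⟨rfl, rfl⟩ | ⟨rfl, rfl⟩
      · left
        have hEq : mkSL 1 b 0 1 h = Amat ^ k := by
          rw [Amat_zpow]; exact mkSL_congr rfl (by omega) rfl rfl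
        rw [hEq]; exact zpow_mem Amat_mem k
      · right
        have hEq : mkSL (-(-1)) (-b) (-0) (-(-1)) (by linarith [h]) = Amat ^ (-k) := by
          rw [Amat_zpow]; exact mkSL_congr (by ring) (by omega) (by ring) (by ring)
        rw [hEq]; exact zpow_mem Amat_mem (-k)
    · have ha0 : a ≠ 0 := fun h0 => by simp [h0] at ha
      have hne : a.natAbs ≠ c.natAbs := by
        intro hEq
        have h1 : Odd a.natAbs := Int.natAbs_odd.2 ha
        have h2 : Even c.natAbs := Int.natAbs_even.2 hc
        rw [hEq] at h1
        exact (Nat.not_odd_iff_even.2 h2) h1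
      obtain ⟨e, he1, he2⟩ : ∃ e : ℤ, (e = 1 ∨ e = -1) ∧ e * (a * c) < 0 := by
        rcases lt_or_gt_of_ne (mul_ne_zero ha0 hc0) with hlt | hgt
        · exact ⟨1, Or.inl rfl, by linarith⟩
        · exact ⟨-1, Or.inr rfl, by linarith⟩
      rcases lt_or_gt_of_ne hne with hlt | hgt
      · -- |a| < |c| : reduce c using B^(e)
        have h1 : a * a < c * c := Int.natAbs_lt_iff_mul_self_lt.1 hlt
        have hcc : (2*e*a + c) * (2*e*a + c) < c * c := by
          rcases he1 with rfl | rfl <;>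
            nlinarith [h1, he2, mul_self_pos.2 ha0]
        have h' : a * (2*e*b + d) - b * (2*e*a + c) = 1 := by linear_combination h
        have hc' : Even (2*e*a + c) := by
          obtain ⟨m, rfl⟩ := hc; exact ⟨e*a + m, by ring⟩
        have hmeas : a.natAbs + (2*e*a + c).natAbs < n := by
          have := Int.natAbs_lt_iff_mul_self_lt.2 hcc
          omega
        rcases ih _ hmeas a b (2*e*a + c) (2*e*b + d) h' ha hb hc' rfl with hm | hm
        · left
          have hEq : mkSL a b c d h = Bmat ^ (-e) * mkSL a b (2*e*a + c) (2*e*b + d) h' := by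
            rw [Bmat_zpow, mkSL_mul]
            exact mkSL_congr (by ring) (by ring) (by ring) (by ring)
          rw [hEq]; exact mul_mem (zpow_mem Bmat_mem _) hm
        · right
          have hEq : mkSL (-a) (-b) (-c) (-d) (by linarith [h]) =
              Bmat ^ (-e) * mkSL (-a) (-b) (-(2*e*a + c)) (-(2*e*b + d))
                (by linarith [h']) := by
            rw [Bmat_zpow, mkSL_mul]
            exact mkSL_congr (by ring) (by ring) (by ring) (by ring)
          rw [hEq]; exact mul_mem (zpow_mem Bmat_mem _) hm
      · -- |c| < |a| : reduce a using A^(e)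
        have h1 : c * c < a * a := Int.natAbs_lt_iff_mul_self_lt.1 hgt
        have haa : (2*e*c + a) * (2*e*c + a) < a * a := by
          rcases he1 with rfl | rfl <;>
            nlinarith [h1, he2, mul_self_pos.2 hc0]
        have h' : (2*e*c + a) * d - (2*e*d + b) * c = 1 := by linear_combination h
        have ha' : Odd (2*e*c + a) := by
          obtain ⟨m, rfl⟩ := ha; exact ⟨e*c + m, by ring⟩
        have hb' : Even (2*e*d + b) := by
          obtain ⟨m, rfl⟩ := hb; exact ⟨e*d + m, by ring⟩
        have hmeas : (2*e*c + a).natAbs + c.natAbs < n := by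
          have := Int.natAbs_lt_iff_mul_self_lt.2 haa
          omega
        rcases ih _ hmeas (2*e*c + a) (2*e*d + b) c d h' ha' hb' hc rfl with hm | hm
        · left
          have hEq : mkSL a b c d h = Amat ^ (-e) * mkSL (2*e*c + a) (2*e*d + b) c d h' := by
            rw [Amat_zpow, mkSL_mul]
            exact mkSL_congr (by ring) (by ring) (by ring) (by ring)
          rw [hEq]; exact mul_mem (zpow_mem Amat_mem _) hm
        · right
          have hEq : mkSL (-a) (-b) (-c) (-d) (by linarith [h]) =
              Amat ^ (-e) * mkSL (-(2*e*c + a)) (-(2*e*d + b)) (-c) (-d)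
                (by linarith [h']) := by
            rw [Amat_zpow, mkSL_mul]
            exact mkSL_congr (by ring) (by ring) (by ring) (by ring)
          rw [hEq]; exact mul_mem (zpow_mem Amat_mem _) hm
private abbrev SL2Z4 := Matrix.SpecialLinearGroup (Fin 2) (ZMod 4)

private instance : DecidableEq SL2Z4 :=
  fun x y => decidable_of_iff (x.1 = y.1) Subtype.ext_iff.symm

private def phi4 : SL2Z →* SL2Z4 :=
  Matrix.SpecialLinearGroup.map (Int.castRingHom (ZMod 4))

private def A4 : SL2Z4 := ⟨!![1, 2; 0, 1], by decide⟩
private def B4 : SL2Z4 := ⟨!![1, 0; 2, 1], by decide⟩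

private lemma phi4_mkSL (a b c d : ℤ) (h) :
    (phi4 (mkSL a b c d h) : Matrix (Fin 2) (Fin 2) (ZMod 4)) =
      !![(a : ZMod 4), b; c, d] := by
  show (Int.castRingHom (ZMod 4)).mapMatrix (!![a,b;c,d] : Matrix (Fin 2) (Fin 2) ℤ) = _
  ext i j
  fin_cases i <;> fin_cases j <;> rfl

private lemma phi4_A : phi4 Amat = A4 := by
  apply Subtype.ext
  rw [Amat, phi4_mkSL]
  norm_num [A4]

private lemma phi4_B : phi4 Bmat = B4 := by
  apply Subtype.ext
  rw [Bmat, phi4_mkSL]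
  norm_num [B4]

private def S4 : Set SL2Z4 := {1, A4, B4, A4 * B4}

private lemma mem_S4_of_mem_Hgrp {g : SL2Z} (hg : g ∈ Hgrp) : phi4 g ∈ S4 := by
  induction hg using Subgroup.closure_induction with
  | mem x hx =>
      rcases hx with rfl | rfl
      · rw [phi4_A]; exact Or.inr (Or.inl rfl)
      · rw [phi4_B]; exact Or.inr (Or.inr (Or.inl rfl))
  | one => exact Or.inl (by simp)
  | mul x y hx hy px py =>
      rw [_root_.map_mul]
      simp only [S4, Set.mem_insert_iff, Set.mem_singleton_iff] at px py ⊢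
      rcases px with hp | hp | hp | hp <;> rcases py with hq | hq | hq | hq <;>
        rw [hp, hq] <;> decide
  | inv x hx px =>
      rw [map_inv]
      simp only [S4, Set.mem_insert_iff, Set.mem_singleton_iff] at px ⊢
      rcases px with hp | hp | hp | hp <;> rw [hp]
      · exact Or.inl inv_one
      · rw [inv_eq_of_mul_eq_one_right (show A4 * A4 = 1 by decide)]
        exact Or.inr (Or.inl rfl)
      · rw [inv_eq_of_mul_eq_one_right (show B4 * B4 = 1 by decide)]
        exact Or.inr (Or.inr (Or.inl rfl))
      · rw [inv_eq_of_mul_eq_one_right (show (A4 * B4) * (A4 * B4) = 1 by decide)]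
        exact Or.inr (Or.inr (Or.inr rfl))
private lemma ker_le_Hgrp : phi4.ker ≤ Hgrp := by
  intro M hM
  set a := M.1 0 0 with ha'
  set b := M.1 0 1 with hb'
  set c := M.1 1 0 with hc'
  set d := M.1 1 1 with hd'
  have hdet : a * d - b * c = 1 := by
    have := M.2
    rw [Matrix.det_fin_two] at this
    linarith
  have hMeq : M = mkSL a b c d hdet := Subtype.ext (Matrix.eta_fin_two M.1)
  have hker : phi4 M = 1 := hM
  have h1 : (M.1.map (Int.cast : ℤ → ZMod 4)) = (1 : Matrix (Fin 2) (Fin 2) (ZMod 4)) := by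
    have := congrArg Subtype.val hker
    exact this
  have hent : ∀ i j, ((M.1 i j : ℤ) : ZMod 4) = (1 : Matrix (Fin 2) (Fin 2) (ZMod 4)) i j := by
    intro i j
    have := congrFun (congrFun h1 i) j
    simpa [Matrix.map_apply] using this
  have ha4 : ((a : ℤ) : ZMod 4) = 1 := by simpa [Matrix.one_apply] using hent 0 0
  have hb4 : ((b : ℤ) : ZMod 4) = 0 := by simpa [Matrix.one_apply] using hent 0 1
  have hc4 : ((c : ℤ) : ZMod 4) = 0 := by simpa [Matrix.one_apply] using hent 1 0
  have hd4 : ((d : ℤ) : ZMod 4) = 1 := by simpa [Matrix.one_apply] using hent 1 1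
  have hdvd_a : ((4 : ℕ) : ℤ) ∣ a - 1 :=
    (ZMod.intCast_zmod_eq_zero_iff_dvd _ 4).1 (by push_cast; rw [ha4]; ring)
  have hdvd_b : ((4 : ℕ) : ℤ) ∣ b :=
    (ZMod.intCast_zmod_eq_zero_iff_dvd _ 4).1 (by exact_mod_cast hb4)
  have hdvd_c : ((4 : ℕ) : ℤ) ∣ c :=
    (ZMod.intCast_zmod_eq_zero_iff_dvd _ 4).1 (by exact_mod_cast hc4)
  obtain ⟨k1, hk1⟩ := hdvd_a
  obtain ⟨k2, hk2⟩ := hdvd_b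
  obtain ⟨k3, hk3⟩ := hdvd_c
  push_cast at hk1 hk2 hk3
  have hOdd : Odd a := ⟨2 * k1, by linarith⟩
  have hEvb : Even b := ⟨2 * k2, by linarith⟩
  have hEvc : Even c := ⟨2 * k3, by linarith⟩
  rcases key (a.natAbs + c.natAbs) a b c d hdet hOdd hEvb hEvc rfl with hmem | hmem
  · rwa [hMeq]
  · exfalso
    have hS := mem_S4_of_mem_Hgrp hmem
    have hval : phi4 (mkSL (-a) (-b) (-c) (-d) (by linarith [hdet])) =
        (⟨!![3, 0; 0, 3], by decide⟩ : SL2Z4) := by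
      apply Subtype.ext
      rw [phi4_mkSL]
      push_cast
      rw [ha4, hb4, hc4, hd4]
      norm_num
      decide
    rw [hval] at hS
    simp only [S4, Set.mem_insert_iff, Set.mem_singleton_iff] at hS
    rcases hS with hS | hS | hS | hS <;> exact absurd (congrArg Subtype.val hS) (by decide)

private lemma range_lift_eq : (FreeGroup.lift gens).range = Hgrp := by
  rw [FreeGroup.range_lift_eq_closure]
  congr 1
  ext g
  constructor
  · rintro ⟨b, rfl⟩
    cases b
    · exact Or.inr rfl
    · exact Or.inl rfl
  · rintro (rfl | rfl)
    · exact ⟨true, rfl⟩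
    · exact ⟨false, rfl⟩

/-- `SL(2,ℤ)` is virtually free: it has a finite-index subgroup which is a
free group. -/
theorem stmt_9 :
    ∃ H : Subgroup (Matrix.SpecialLinearGroup (Fin 2) ℤ),
      H.FiniteIndex ∧ ∃ ι : Type, Nonempty (H ≃* FreeGroup ι) := by
  refine ⟨Hgrp, Subgroup.finiteIndex_of_le ker_le_Hgrp, Bool, ⟨?_⟩⟩
  exact (MulEquiv.subgroupCongr range_lift_eq.symm).trans
    (MonoidHom.ofInjective pp_inj).symm
end
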